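/- Let n ≥ 1 and let α : {0,...,2^n−1} → ℂ with α_i ≠ 0 for all i. Then α is fully separable if and only if α is pair product invariant. -/

import Mathlib

/-- A vector `α` on indices `{0, ..., 2^n - 1}` is *pair product invariant* if for every
`k` with `1 ≤ k ≤ n` there is a constant `c` such that `α i * α (2^k - i - 1) = c`
for all `i` with `0 ≤ i ≤ 2^k - 1`. -/
def PairProductInvariant (n : ℕ) (α : ℕ → ℂ) : Prop :=
  ∀ k, 1 ≤ k → k ≤ n → ∃ c : ℂ, ∀ i, i ≤ 2 ^ k - 1 → α i * α (2 ^ k - i - 1) = c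

/-- Identifying an index `a ∈ {0, ..., 2^n - 1}` with its binary expansion (most significant
bit first, so the `i`-th bit of `a` is `a.testBit (n - 1 - i)`), a vector `α` is
*fully separable* if it is a product `α(x₁ ... xₙ) = ψ₁(x₁) ⋯ ψₙ(xₙ)` of one-qubit vectors. -/
def FullySeparable (n : ℕ) (α : ℕ → ℂ) : Prop :=
  ∃ ψ : Fin n → Bool → ℂ, ∀ a, a < 2 ^ n →
    α a = ∏ i : Fin n, ψ i (Nat.testBit a (n - 1 - (i : ℕ)))

/-- Theorem 1 of Jorrand–Mhalla: a state with all amplitudes nonzero is fully separable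
if and only if it is pair product invariant. -/
theorem fullySeparable_iff_pairProductInvariant (n : ℕ) (hn : 1 ≤ n) (α : ℕ → ℂ)
    (h0 : ∀ i, i < 2 ^ n → α i ≠ 0) :
    FullySeparable n α ↔ PairProductInvariant n α := by
  constructor
  · rintro ⟨ψ, hψ⟩ k hk1 hkn
    refine ⟨∏ j : Fin n, (if (n - 1 - (j:ℕ)) < k then ψ j false * ψ j true
      else ψ j false * ψ j false), ?_⟩
    intro i hi
    have hk0 : 0 < 2 ^ k := Nat.pow_pos (by norm_num)
    have hik : i < 2 ^ k := by omega
    have hkn' : 2 ^ k ≤ 2 ^ n := Nat.pow_le_pow_right (by norm_num) hkn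
    have hin : i < 2 ^ n := lt_of_lt_of_le hik hkn'
    have h2 : 2 ^ k - i - 1 < 2 ^ n := by omega
    rw [hψ i hin, hψ _ h2, ← Finset.prod_mul_distrib]
    refine Finset.prod_congr rfl fun j _ => ?_
    have heq : 2 ^ k - i - 1 = 2 ^ k - (i + 1) := by omega
    have hbit : Nat.testBit (2 ^ k - i - 1) (n - 1 - (j:ℕ)) =
        (decide ((n - 1 - (j:ℕ)) < k) && !(Nat.testBit i (n - 1 - (j:ℕ)))) := by
      rw [heq, Nat.testBit_two_pow_sub_succ hik]
    by_cases hp : (n - 1 - (j:ℕ)) < k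
    · cases h : Nat.testBit i (n - 1 - (j:ℕ)) <;>
        simp [hbit, hp, h, mul_comm]
    · have hbf : Nat.testBit i (n - 1 - (j:ℕ)) = false :=
        Nat.testBit_lt_two_pow (lt_of_lt_of_le hik
          (Nat.pow_le_pow_right (by norm_num) (by omega)))
      simp [hbit, hp, hbf]
  · intro hppi
    have key : ∀ m, m ≤ n → ∀ a, a < 2 ^ m →
        α a = α 0 * ∏ p ∈ Finset.range m,
          (if a.testBit p then α (2 ^ (p+1) - 1) / α (2 ^ p - 1) else 1) := by
      intro m
      induction m with
      | zero => intro _ a ha; interval_cases a; simp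
      | succ m ih =>
        intro hmn a ha
        have hm0 : 0 < 2 ^ m := Nat.pow_pos (by norm_num)
        have hpow : 2 ^ (m+1) = 2 ^ m + 2 ^ m := by ring
        by_cases hlt : a < 2 ^ m
        · have hbf : a.testBit m = false := Nat.testBit_lt_two_pow hlt
          rw [Finset.prod_range_succ, hbf, if_neg (by simp), mul_one]
          exact ih (by omega) a hlt
        · set b := a - 2 ^ m with hb
          have hab : a = 2 ^ m + b := by omega
          have hblt : b < 2 ^ m := by omega
          have hbt : a.testBit m = true := by
            rw [hab, Nat.testBit_two_pow_add_eq, Nat.testBit_lt_two_pow hblt]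
            rfl
          have hbits : ∀ p ∈ Finset.range m, a.testBit p = b.testBit p := by
            intro p hp
            rw [hab, Nat.testBit_two_pow_add_gt (Finset.mem_range.mp hp)]
          have hne : ∀ x, x < 2 ^ (m+1) → α x ≠ 0 := fun x hx =>
            h0 x (lt_of_lt_of_le hx (Nat.pow_le_pow_right (by norm_num) hmn))
          have n3 : α 0 ≠ 0 := hne 0 (by omega)
          have hrat : α a = α b * (α (2 ^ (m+1) - 1) / α (2 ^ m - 1)) := by
            rcases Nat.eq_zero_or_pos m with hm | hm
            · subst hm
              have hb0 : b = 0 := by omega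
              have ha1 : a = 1 := by omega
              rw [hb0, ha1]
              norm_num
              rw [mul_div_assoc', mul_comm, mul_div_assoc, div_self n3, mul_one]
            · obtain ⟨c, hc⟩ := hppi (m+1) (by omega) hmn
              obtain ⟨c', hc'⟩ := hppi m hm (by omega)
              have e1 := hc (2 ^ m - 1 - b) (by omega)
              have e2 := hc 0 (by omega)
              have e3 := hc' b (by omega)
              have e4 := hc' 0 (by omega)
              have hi1 : 2 ^ (m+1) - (2 ^ m - 1 - b) - 1 = a := by omega
              have hi2 : 2 ^ (m+1) - 0 - 1 = 2 ^ (m+1) - 1 := by omega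
              have hi3 : 2 ^ m - b - 1 = 2 ^ m - 1 - b := by omega
              have hi4 : 2 ^ m - 0 - 1 = 2 ^ m - 1 := by omega
              rw [hi1] at e1
              rw [hi2] at e2
              rw [hi3] at e3
              rw [hi4] at e4
              have n1 : α (2 ^ m - 1 - b) ≠ 0 := hne _ (by omega)
              have n2 : α (2 ^ m - 1) ≠ 0 := hne _ (by omega)
              have key2 : α a * α (2 ^ m - 1) * (α (2 ^ m - 1 - b) * α 0) =
                  α b * α (2 ^ (m+1) - 1) * (α (2 ^ m - 1 - b) * α 0) := by
                calc α a * α (2 ^ m - 1) * (α (2 ^ m - 1 - b) * α 0)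
                    = (α (2 ^ m - 1 - b) * α a) * (α 0 * α (2 ^ m - 1)) := by ring
                  _ = c * c' := by rw [e1, e4]
                  _ = (α 0 * α (2 ^ (m+1) - 1)) * (α b * α (2 ^ m - 1 - b)) := by
                      rw [e2, e3]
                  _ = α b * α (2 ^ (m+1) - 1) * (α (2 ^ m - 1 - b) * α 0) := by ring
              have hcan := mul_right_cancel₀ (mul_ne_zero n1 n3) key2
              rw [← mul_div_assoc, eq_div_iff n2]
              exact hcan
          have hprod : (∏ p ∈ Finset.range m,
              (if a.testBit p then α (2 ^ (p+1) - 1) / α (2 ^ p - 1) else 1)) =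
              ∏ p ∈ Finset.range m,
              (if b.testBit p then α (2 ^ (p+1) - 1) / α (2 ^ p - 1) else 1) :=
            Finset.prod_congr rfl fun p hp => by rw [hbits p hp]
          rw [Finset.prod_range_succ, hbt, if_pos rfl, hprod, hrat,
            ih (by omega) b hblt]
          ring
    refine ⟨fun i b => (if (i:ℕ) = 0 then α 0 else 1) *
      (if b then α (2 ^ (n - (i:ℕ)) - 1) / α (2 ^ (n - 1 - (i:ℕ)) - 1) else 1), ?_⟩
    intro a ha
    rw [key n le_rfl a ha, Finset.prod_mul_distrib]
    congr 1
    · rw [Finset.prod_eq_single (⟨0, by omega⟩ : Fin n)]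
      · simp
      · intro j _ hj
        have hj' : (j:ℕ) ≠ 0 := fun h => hj (Fin.ext h)
        simp [hj']
      · simp
    · set g : ℕ → ℂ := fun p => if a.testBit p then α (2 ^ (p+1) - 1) / α (2 ^ p - 1) else 1
      have hfun : ∀ j : Fin n,
          (if a.testBit (n - 1 - (j:ℕ)) then
            α (2 ^ (n - (j:ℕ)) - 1) / α (2 ^ (n - 1 - (j:ℕ)) - 1) else 1) =
          g (n - 1 - (j:ℕ)) := by
        intro j
        have hjn : (j:ℕ) < n := j.isLt
        have hnn : n - (j:ℕ) = (n - 1 - (j:ℕ)) + 1 := by omega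
        rw [hnn]
      exact ((Finset.prod_congr rfl fun j _ => hfun j).trans
        ((Fin.prod_univ_eq_prod_range (fun i => g (n - 1 - i)) n).trans
          (Finset.prod_range_reflect g n))).symm
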